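/- Let ℓ_u, ℓ_r : ℝ^n → ℝ be convex, differentiable and G-smooth, with |ℓ_r(θ)| ≤ B for all θ. Let D > 0, t ≥ 1, let λ_0, …, λ_t ∈ [0, D], let β_0, …, β_{t−1} ≥ 0 and ε_0, …, ε_{t−1} ≥ 0 satisfy |λ_{i+1} − λ_i| ≤ β_i (G L + ε_i) for i = 0, …, t−1, and let α > 0 satisfy α (1 + D) G ≤ 1. Define C_λ(θ) = ℓ_u(θ) + λ ℓ_r(θ) and let θ_0, …, θ_t satisfy θ_{i+1} = θ_i − α ∇C_{λ_i}(θ_i). Suppose θ* minimizes θ ↦ Σ_{i=1}^{t} C_{λ_i}(θ) over ℝ^n and for each i, θ*_i minimizes C_{λ_i} over ℝ^n. Then Σ_{i=1}^{t} C_{λ_i}(θ_i) − Σ_{i=1}^{t} C_{λ_i}(θ*_i) ≤ B Σ_{i=0}^{t−1} β_i (G L + ε_i) + 2B Σ_{l=1}^{t−1} l β_l (G L + ε_l) + (1/(2α)) ‖θ_0 − θ*‖² + D B. -/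

import Mathlib

open scoped RealInnerProductSpace BigOperators

section AuxEupmu
variable {E : Type*} [NormedAddCommGroup E] [InnerProductSpace ℝ E] [CompleteSpace E]

lemma eupmu_line_hasDerivAt {f : E → ℝ} {g : E → E} (hf : ∀ p, HasGradientAt f (g p) p)
    (x z : E) (s : ℝ) :
    HasDerivAt (fun s : ℝ => f (s • (z - x) + x))
      (⟪g (s • (z - x) + x), z - x⟫) s := by
  have hline : HasDerivAt (fun s : ℝ => s • (z - x) + x) (z - x) s := by
    simpa using ((hasDerivAt_id s).smul_const (z - x)).add_const x
  have h := (hf (s • (z - x) + x)).hasFDerivAt.comp_hasDerivAt s hline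
  simpa [InnerProductSpace.toDual_apply_apply, Function.comp_def] using h

lemma eupmu_grad_convex_le {f : E → ℝ} {g : E → E} (hc : ConvexOn ℝ Set.univ f)
    (hf : ∀ p, HasGradientAt f (g p) p) (x z : E) :
    f x + (⟪g x, z - x⟫) ≤ f z := by
  have hφc : ConvexOn ℝ Set.univ (fun s : ℝ => f (s • (z - x) + x)) := by
    have h := hc.comp_affineMap (AffineMap.lineMap x z : ℝ →ᵃ[ℝ] E)
    have he : (fun s : ℝ => f (s • (z - x) + x)) = f ∘ (AffineMap.lineMap x z : ℝ →ᵃ[ℝ] E) := by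
      funext s
      simp only [Function.comp, AffineMap.lineMap_apply_module]
      congr 1
      module
    rw [he]
    simpa using h
  have hd : HasDerivAt (fun s : ℝ => f (s • (z - x) + x)) (⟪g x, z - x⟫) 0 := by
    simpa using eupmu_line_hasDerivAt hf x z 0
  have h01 := hφc.le_slope_of_hasDerivAt (Set.mem_univ (0:ℝ)) (Set.mem_univ (1:ℝ)) one_pos hd
  rw [slope_def_field] at h01
  simp only [zero_smul, zero_add, one_smul, sub_add_cancel] at h01
  have : (⟪g x, z - x⟫) ≤ f z - f x := by
    simpa [div_one] using h01
  linarith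

lemma eupmu_grad_descent_le {f : E → ℝ} {g : E → E} {K : ℝ}
    (hf : ∀ p, HasGradientAt f (g p) p)
    (hK : ∀ p q, ‖g p - g q‖ ≤ K * ‖p - q‖) (x z : E) :
    f z ≤ f x + (⟪g x, z - x⟫) + K / 2 * ‖z - x‖ ^ 2 := by
  set ψ : ℝ → ℝ := fun s =>
    f (s • (z - x) + x) - s * ⟪g x, z - x⟫ - K / 2 * ‖z - x‖ ^ 2 * s ^ 2 with hψdef
  have hψd : ∀ s : ℝ, HasDerivAt ψ
      ((⟪g (s • (z - x) + x), z - x⟫) - ⟪g x, z - x⟫ - K * ‖z - x‖ ^ 2 * s) s := by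
    intro s
    have h1 := eupmu_line_hasDerivAt hf x z s
    have h2 : HasDerivAt (fun s : ℝ => s * ⟪g x, z - x⟫) (⟪g x, z - x⟫) s := by
      simpa using (hasDerivAt_id s).mul_const (⟪g x, z - x⟫)
    have h3 : HasDerivAt (fun s : ℝ => K / 2 * ‖z - x‖ ^ 2 * s ^ 2)
        (K * ‖z - x‖ ^ 2 * s) s := by
      have h := (hasDerivAt_pow 2 s).const_mul (K / 2 * ‖z - x‖ ^ 2)
      exact h.congr_deriv (by norm_num <;> ring)
    exact (h1.sub h2).sub h3
  have hanti : AntitoneOn ψ (Set.Icc (0:ℝ) 1) := by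
    apply antitoneOn_of_deriv_nonpos (convex_Icc 0 1)
    · have hdiff : Differentiable ℝ ψ := fun s => (hψd s).differentiableAt
      exact hdiff.continuous.continuousOn
    · have hdiff : Differentiable ℝ ψ := fun s => (hψd s).differentiableAt
      exact hdiff.differentiableOn
    · intro s hs
      rw [interior_Icc] at hs
      have hs0 : (0:ℝ) ≤ s := hs.1.le
      rw [(hψd s).deriv]
      have hinner : (⟪g (s • (z - x) + x) - g x, z - x⟫) ≤ K * s * ‖z - x‖ ^ 2 := by
        calc (⟪g (s • (z - x) + x) - g x, z - x⟫)
            ≤ ‖g (s • (z - x) + x) - g x‖ * ‖z - x‖ := real_inner_le_norm _ _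
          _ ≤ (K * ‖(s • (z - x) + x) - x‖) * ‖z - x‖ :=
              mul_le_mul_of_nonneg_right (hK _ _) (norm_nonneg _)
          _ = K * s * ‖z - x‖ ^ 2 := by
              rw [add_sub_cancel_right, norm_smul, Real.norm_eq_abs, abs_of_nonneg hs0]
              ring
      have hsplit : (⟪g (s • (z - x) + x), z - x⟫) - (⟪g x, z - x⟫)
          = ⟪g (s • (z - x) + x) - g x, z - x⟫ := (inner_sub_left _ _ _).symm
      nlinarith [hinner, hsplit]
  have h10 : ψ 1 ≤ ψ 0 := hanti (Set.left_mem_Icc.2 zero_le_one)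
    (Set.right_mem_Icc.2 zero_le_one) zero_le_one
  have hψ0 : ψ 0 = f x := by simp [hψdef]
  have hψ1 : ψ 1 = f z - (⟪g x, z - x⟫) - K / 2 * ‖z - x‖ ^ 2 := by
    simp [hψdef, sub_add_cancel]
  rw [hψ0, hψ1] at h10
  linarith

lemma eupmu_gd_step {f : E → ℝ} {g : E → E} {K α : ℝ}
    (hc : ConvexOn ℝ Set.univ f) (hf : ∀ p, HasGradientAt f (g p) p)
    (hK : ∀ p q, ‖g p - g q‖ ≤ K * ‖p - q‖)
    (hα : 0 < α) (hαK : α * K ≤ 1) (x z : E) :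
    f (x - α • g x) ≤ f z + (‖x - z‖ ^ 2 - ‖x - α • g x - z‖ ^ 2) / (2 * α) := by
  set y : E := x - α • g x with hy
  have hdesc : f y ≤ f x + (⟪g x, y - x⟫) + K / 2 * ‖y - x‖ ^ 2 :=
    eupmu_grad_descent_le hf hK x y
  have hcv : f x ≤ f z + (⟪g x, x - z⟫) := by
    have h := eupmu_grad_convex_le hc hf x z
    have hne : (⟪g x, z - x⟫) = -(⟪g x, x - z⟫) := by
      rw [← inner_neg_right]; congr 1; abel
    linarith [h, hne.le, hne.ge]
  have hxy : x - y = α • g x := by rw [hy]; abel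
  have hIp : (⟪x - y, y - z⟫) = α * ⟪g x, y - z⟫ := by
    rw [hxy, real_inner_smul_left]
  have hnorm : ‖x - z‖ ^ 2 = ‖x - y‖ ^ 2 + 2 * (⟪x - y, y - z⟫) + ‖y - z‖ ^ 2 := by
    have h := norm_add_sq_real (x - y) (y - z)
    rw [sub_add_sub_cancel] at h
    exact h
  have hgsplit : (⟪g x, x - z⟫) + (⟪g x, y - x⟫) = ⟪g x, y - z⟫ := by
    rw [← inner_add_right]; congr 1; abel
  have h2α : (0:ℝ) < 2 * α := by linarith
  have hKle : K / 2 * ‖y - x‖ ^ 2 ≤ 1 / (2 * α) * ‖y - x‖ ^ 2 := by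
    have hhalf : K / 2 ≤ 1 / (2 * α) := by
      rw [div_le_div_iff₀ two_pos h2α]
      nlinarith [hαK]
    exact mul_le_mul_of_nonneg_right hhalf (sq_nonneg _)
  have hrev : ‖y - x‖ = ‖x - y‖ := norm_sub_rev _ _
  have hinner_eq : (⟪g x, y - z⟫) = (⟪x - y, y - z⟫) / α := by
    rw [hIp, mul_div_cancel_left₀ _ hα.ne']
  rw [hrev] at hdesc hKle
  have hmid : f y ≤ f z + (⟪x - y, y - z⟫) / α + 1 / (2 * α) * ‖x - y‖ ^ 2 := by
    linarith [hdesc, hcv, hgsplit, hinner_eq, hKle]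
  have key : (⟪x - y, y - z⟫) / α + 1 / (2 * α) * ‖x - y‖ ^ 2
      = (‖x - z‖ ^ 2 - ‖y - z‖ ^ 2) / (2 * α) := by
    rw [hnorm]
    field_simp
    ring
  linarith [hmid, key.le, key.ge]

lemma eupmu_comp_grad {ℓu ℓr : E → ℝ} {gu gr : E → E} (hu : ∀ x, HasGradientAt ℓu (gu x) x)
    (hr : ∀ x, HasGradientAt ℓr (gr x) x) (lam : ℝ) (p : E) :
    HasGradientAt (fun q => ℓu q + lam * ℓr q) (gu p + lam • gr p) p := by
  have h1 := (hu p).hasFDerivAt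
  have h2 := (hr p).hasFDerivAt.const_mul lam
  have h := h1.add h2
  rw [hasGradientAt_iff_hasFDerivAt]
  rw [map_add, map_smul]
  exact h

lemma eupmu_abs_sub_le_sum_Ico (lam : ℕ → ℝ) (c : ℕ → ℝ)
    (i t : ℕ) (hit : i ≤ t) (h : ∀ l, i ≤ l → l < t → |lam (l + 1) - lam l| ≤ c l) :
    |lam t - lam i| ≤ ∑ l ∈ Finset.Ico i t, c l := by
  induction t, hit using Nat.le_induction with
  | base => simp
  | succ t hit ih =>
    rw [Finset.sum_Ico_succ_top hit]
    have h1 := h t hit (Nat.lt_succ_self t)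
    have h2 := ih (fun l hl hl' => h l hl (hl'.trans (Nat.lt_succ_self t)))
    have he : lam (t + 1) - lam i = (lam t - lam i) + (lam (t + 1) - lam t) := by ring
    rw [he]
    exact (abs_add_le _ _).trans (add_le_add h2 h1)

end AuxEupmu


/-- Explicit dynamic-regret form of the paper's Theorem 2
(Pareto optimality): under the hypotheses of the static-regret lemma, and with
`θ*` a minimizer of `Σ_i C_{λ_i}` and `θ*_i` per-step minimizers of `C_{λ_i}`
(where `C_λ = ℓ_u + λ ℓ_r`), one has
`Σ_{i=1}^t C_{λ_i}(θ_i) − Σ_{i=1}^t C_{λ_i}(θ*_i)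
  ≤ B Σ_{i=0}^{t−1} β_i(GL + ε_i) + 2B Σ_{l=1}^{t−1} l β_l(GL + ε_l)
    + ‖θ_0 − θ*‖²/(2α) + DB`. -/
theorem eupmu_dynamic_regret {n : ℕ}
    (ℓu ℓr : EuclideanSpace ℝ (Fin n) → ℝ)
    (gu gr : EuclideanSpace ℝ (Fin n) → EuclideanSpace ℝ (Fin n))
    (G L B D : ℝ) (hD : 0 < D)
    (hcu : ConvexOn ℝ Set.univ ℓu) (hcr : ConvexOn ℝ Set.univ ℓr)
    (hu : ∀ x, HasGradientAt ℓu (gu x) x)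
    (hr : ∀ x, HasGradientAt ℓr (gr x) x)
    (hGu : ∀ x y, ‖gu x - gu y‖ ≤ G * ‖x - y‖)
    (hGr : ∀ x y, ‖gr x - gr y‖ ≤ G * ‖x - y‖)
    (hB : ∀ x, |ℓr x| ≤ B)
    (t : ℕ) (ht : 1 ≤ t) (lam β ε : ℕ → ℝ)
    (hlam : ∀ i ≤ t, lam i ∈ Set.Icc (0 : ℝ) D)
    (hβ : ∀ i < t, 0 ≤ β i) (hε : ∀ i < t, 0 ≤ ε i)
    (hlamstep : ∀ i < t, |lam (i + 1) - lam i| ≤ β i * (G * L + ε i))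
    (α : ℝ) (hα : 0 < α) (hαG : α * (1 + D) * G ≤ 1)
    (θ : ℕ → EuclideanSpace ℝ (Fin n))
    (hupd : ∀ i < t, θ (i + 1) = θ i - α • (gu (θ i) + lam i • gr (θ i)))
    (θstar : EuclideanSpace ℝ (Fin n))
    (hstar : ∀ θ' : EuclideanSpace ℝ (Fin n),
      ∑ i ∈ Finset.Icc 1 t, (ℓu θstar + lam i * ℓr θstar)
        ≤ ∑ i ∈ Finset.Icc 1 t, (ℓu θ' + lam i * ℓr θ'))
    (θi : ℕ → EuclideanSpace ℝ (Fin n))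
    (hi : ∀ i, 1 ≤ i → i ≤ t → ∀ θ' : EuclideanSpace ℝ (Fin n),
      ℓu (θi i) + lam i * ℓr (θi i) ≤ ℓu θ' + lam i * ℓr θ') :
    ∑ i ∈ Finset.Icc 1 t, (ℓu (θ i) + lam i * ℓr (θ i))
        - ∑ i ∈ Finset.Icc 1 t, (ℓu (θi i) + lam i * ℓr (θi i))
      ≤ B * ∑ i ∈ Finset.range t, β i * (G * L + ε i)
        + 2 * B * ∑ l ∈ Finset.Icc 1 (t - 1), (l : ℝ) * (β l * (G * L + ε l))
        + (1 / (2 * α)) * ‖θ 0 - θstar‖ ^ 2 + D * B := by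
  classical
  have hBnn : 0 ≤ B := le_trans (abs_nonneg _) (hB 0)
  have hcnn : ∀ l, l < t → 0 ≤ β l * (G * L + ε l) :=
    fun l hl => (abs_nonneg _).trans (hlamstep l hl)
  -- convexity of composites
  have hconvF : ∀ i ≤ t, ConvexOn ℝ Set.univ (fun p => ℓu p + lam i * ℓr p) := by
    intro i hit
    have h := hcu.add (hcr.smul (hlam i hit).1)
    exact h
  -- gradients of composites
  have hgrad : ∀ (i : ℕ) (p : EuclideanSpace ℝ (Fin n)),
      HasGradientAt (fun q => ℓu q + lam i * ℓr q) (gu p + lam i • gr p) p :=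
    fun i p => eupmu_comp_grad hu hr (lam i) p
  -- Lipschitz bound for composite gradients
  have hlip : ∀ i ≤ t, ∀ p q : EuclideanSpace ℝ (Fin n),
      ‖(gu p + lam i • gr p) - (gu q + lam i • gr q)‖ ≤ ((1 + D) * G) * ‖p - q‖ := by
    intro i hit p q
    have h1 := hGu p q
    have h2 := hGr p q
    have hl0 := (hlam i hit).1
    have hlD := (hlam i hit).2
    have hre : (gu p + lam i • gr p) - (gu q + lam i • gr q)
        = (gu p - gu q) + lam i • (gr p - gr q) := by
      rw [smul_sub]; abel
    rw [hre]
    have htri := norm_add_le (gu p - gu q) (lam i • (gr p - gr q))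
    rw [norm_smul, Real.norm_eq_abs, abs_of_nonneg hl0] at htri
    have hGnn : 0 ≤ G * ‖p - q‖ := le_trans (norm_nonneg _) h2
    nlinarith [mul_le_mul_of_nonneg_left h2 hl0, norm_nonneg (gr p - gr q)]
  -- GD step inequality
  have hstep : ∀ i < t,
      (ℓu (θ (i + 1)) + lam i * ℓr (θ (i + 1)))
        ≤ (ℓu θstar + lam i * ℓr θstar)
          + (‖θ i - θstar‖ ^ 2 - ‖θ (i + 1) - θstar‖ ^ 2) / (2 * α) := by
    intro i hit
    have hαK : α * ((1 + D) * G) ≤ 1 := by rw [← mul_assoc]; exact hαG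
    have h := eupmu_gd_step (hconvF i hit.le) (hgrad i) (hlip i hit.le) hα hαK
      (θ i) θstar
    rw [hupd i hit]
    exact h
  -- summed GD (static regret vs θstar with shifted indices)
  have hsumgd : ∑ j ∈ Finset.range t,
      ((ℓu (θ (j + 1)) + lam j * ℓr (θ (j + 1))) - (ℓu θstar + lam j * ℓr θstar))
      ≤ 1 / (2 * α) * ‖θ 0 - θstar‖ ^ 2 := by
    have htel : ∑ j ∈ Finset.range t,
        (‖θ j - θstar‖ ^ 2 / (2 * α) - ‖θ (j + 1) - θstar‖ ^ 2 / (2 * α))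
        = ‖θ 0 - θstar‖ ^ 2 / (2 * α) - ‖θ t - θstar‖ ^ 2 / (2 * α) :=
      Finset.sum_range_sub' (fun j => ‖θ j - θstar‖ ^ 2 / (2 * α)) t
    have hle : ∀ j ∈ Finset.range t,
        (ℓu (θ (j + 1)) + lam j * ℓr (θ (j + 1))) - (ℓu θstar + lam j * ℓr θstar)
          ≤ ‖θ j - θstar‖ ^ 2 / (2 * α) - ‖θ (j + 1) - θstar‖ ^ 2 / (2 * α) := by
      intro j hj
      have h := hstep j (Finset.mem_range.1 hj)
      rw [sub_div] at h
      linarith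
    have hlast : 0 ≤ ‖θ t - θstar‖ ^ 2 / (2 * α) := by positivity
    calc ∑ j ∈ Finset.range t,
        ((ℓu (θ (j + 1)) + lam j * ℓr (θ (j + 1))) - (ℓu θstar + lam j * ℓr θstar))
        ≤ ∑ j ∈ Finset.range t,
          (‖θ j - θstar‖ ^ 2 / (2 * α) - ‖θ (j + 1) - θstar‖ ^ 2 / (2 * α)) :=
          Finset.sum_le_sum hle
      _ = ‖θ 0 - θstar‖ ^ 2 / (2 * α) - ‖θ t - θstar‖ ^ 2 / (2 * α) := htel
      _ ≤ 1 / (2 * α) * ‖θ 0 - θstar‖ ^ 2 := by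
          rw [div_eq_mul_one_div, mul_comm]
          linarith
  -- reindexing Icc 1 t ↔ range t
  have hre : ∀ f : ℕ → ℝ, ∑ i ∈ Finset.Icc 1 t, f i = ∑ j ∈ Finset.range t, f (j + 1) := by
    intro f
    rw [← Finset.Ico_add_one_right_eq_Icc, Finset.sum_Ico_eq_sum_range]
    simp only [Nat.add_sub_cancel]
    exact Finset.sum_congr rfl fun j _ => by rw [Nat.add_comm]
  -- shift in λ index (first term)
  have hshift1 : ∑ j ∈ Finset.range t,
      ((ℓu (θ (j + 1)) + lam (j + 1) * ℓr (θ (j + 1)))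
        - (ℓu (θ (j + 1)) + lam j * ℓr (θ (j + 1))))
      ≤ B * ∑ j ∈ Finset.range t, β j * (G * L + ε j) := by
    rw [Finset.mul_sum]
    apply Finset.sum_le_sum
    intro j hj
    have hjt := Finset.mem_range.1 hj
    have h1 := hlamstep j hjt
    have h2 := hB (θ (j + 1))
    have he : (ℓu (θ (j + 1)) + lam (j + 1) * ℓr (θ (j + 1)))
        - (ℓu (θ (j + 1)) + lam j * ℓr (θ (j + 1)))
        = (lam (j + 1) - lam j) * ℓr (θ (j + 1)) := by ring
    rw [he]
    calc (lam (j + 1) - lam j) * ℓr (θ (j + 1))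
        ≤ |(lam (j + 1) - lam j) * ℓr (θ (j + 1))| := le_abs_self _
      _ = |lam (j + 1) - lam j| * |ℓr (θ (j + 1))| := abs_mul _ _
      _ ≤ (β j * (G * L + ε j)) * B :=
          mul_le_mul h1 h2 (abs_nonneg _) (hcnn j hjt)
      _ = B * (β j * (G * L + ε j)) := by ring
  -- telescoping λ at θstar (the D·B term)
  have htel2 : ∑ j ∈ Finset.range t,
      ((ℓu θstar + lam (j + 1) * ℓr θstar) - (ℓu θstar + lam j * ℓr θstar))
      = (lam t - lam 0) * ℓr θstar := by
    have h := Finset.sum_range_sub (fun j => lam j * ℓr θstar) t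
    calc ∑ j ∈ Finset.range t,
        ((ℓu θstar + lam (j + 1) * ℓr θstar) - (ℓu θstar + lam j * ℓr θstar))
        = ∑ j ∈ Finset.range t, (lam (j + 1) * ℓr θstar - lam j * ℓr θstar) :=
          Finset.sum_congr rfl fun j _ => by ring
      _ = lam t * ℓr θstar - lam 0 * ℓr θstar := h
      _ = (lam t - lam 0) * ℓr θstar := by ring
  have hDB : -(D * B) ≤ (lam t - lam 0) * ℓr θstar := by
    have h0 := hlam 0 (Nat.zero_le t)
    have hT := hlam t le_rfl
    have habs : |lam t - lam 0| ≤ D := by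
      rw [abs_le]
      constructor <;> [linarith [hT.1, h0.2]; linarith [hT.2, h0.1]]
    have hprod : |(lam t - lam 0) * ℓr θstar| ≤ D * B := by
      rw [abs_mul]
      exact mul_le_mul habs (hB _) (abs_nonneg _) hD.le
    linarith [neg_abs_le ((lam t - lam 0) * ℓr θstar), hprod]
  -- dynamic-regret term via λ variation
  have hdyn : ∑ i ∈ Finset.Icc 1 t,
      ((ℓu (θi t) + lam i * ℓr (θi t)) - (ℓu (θi i) + lam i * ℓr (θi i)))
      ≤ 2 * B * ∑ l ∈ Finset.Icc 1 (t - 1), (l : ℝ) * (β l * (G * L + ε l)) := by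
    have hper : ∀ i ∈ Finset.Icc 1 t,
        (ℓu (θi t) + lam i * ℓr (θi t)) - (ℓu (θi i) + lam i * ℓr (θi i))
          ≤ ∑ l ∈ Finset.Ico i t, 2 * B * (β l * (G * L + ε l)) := by
      intro i hi'
      obtain ⟨h1i, hit⟩ := Finset.mem_Icc.1 hi'
      have habs : |lam t - lam i| ≤ ∑ l ∈ Finset.Ico i t, β l * (G * L + ε l) :=
        eupmu_abs_sub_le_sum_Ico lam _ i t hit (fun l _ hl' => hlamstep l hl')
      have hmin := hi t ht le_rfl (θi i)
      have e1 : |(lam i - lam t) * ℓr (θi t)| ≤ |lam t - lam i| * B := by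
        rw [abs_mul, abs_sub_comm]
        exact mul_le_mul_of_nonneg_left (hB _) (abs_nonneg _)
      have e2 : |(lam t - lam i) * ℓr (θi i)| ≤ |lam t - lam i| * B := by
        rw [abs_mul]
        exact mul_le_mul_of_nonneg_left (hB _) (abs_nonneg _)
      have r1 : lam i * ℓr (θi t)
          = lam t * ℓr (θi t) + (lam i - lam t) * ℓr (θi t) := by ring
      have r2 : lam i * ℓr (θi i)
          = lam t * ℓr (θi i) - (lam t - lam i) * ℓr (θi i) := by ring
      have hfinal : (ℓu (θi t) + lam i * ℓr (θi t)) - (ℓu (θi i) + lam i * ℓr (θi i))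
          ≤ 2 * B * |lam t - lam i| := by
        have l1 := le_abs_self ((lam i - lam t) * ℓr (θi t))
        have l2 := le_abs_self ((lam t - lam i) * ℓr (θi i))
        nlinarith [hmin, l1, l2, e1, e2]
      calc (ℓu (θi t) + lam i * ℓr (θi t)) - (ℓu (θi i) + lam i * ℓr (θi i))
          ≤ 2 * B * |lam t - lam i| := hfinal
        _ ≤ 2 * B * ∑ l ∈ Finset.Ico i t, β l * (G * L + ε l) := by
            apply mul_le_mul_of_nonneg_left habs
            linarith
        _ = ∑ l ∈ Finset.Ico i t, 2 * B * (β l * (G * L + ε l)) := by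
            rw [Finset.mul_sum]
      -- end per-i
    have hdouble : ∑ i ∈ Finset.Icc 1 t, ∑ l ∈ Finset.Ico i t,
          2 * B * (β l * (G * L + ε l))
        = ∑ l ∈ Finset.Ico 1 t, ∑ i ∈ Finset.Icc 1 l, 2 * B * (β l * (G * L + ε l)) := by
      apply Finset.sum_comm'
      intro i l
      simp only [Finset.mem_Icc, Finset.mem_Ico]
      omega
    have hinner : ∀ l, ∑ i ∈ Finset.Icc 1 l, 2 * B * (β l * (G * L + ε l))
        = (l : ℝ) * (2 * B * (β l * (G * L + ε l))) := by
      intro l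
      rw [Finset.sum_const, Nat.card_Icc]
      simp [nsmul_eq_mul]
    have hIcoIcc : Finset.Ico 1 t = Finset.Icc 1 (t - 1) := by
      rw [← Finset.Ico_add_one_right_eq_Icc, Nat.sub_add_cancel ht]
    calc ∑ i ∈ Finset.Icc 1 t,
        ((ℓu (θi t) + lam i * ℓr (θi t)) - (ℓu (θi i) + lam i * ℓr (θi i)))
        ≤ ∑ i ∈ Finset.Icc 1 t, ∑ l ∈ Finset.Ico i t, 2 * B * (β l * (G * L + ε l)) :=
          Finset.sum_le_sum hper
      _ = ∑ l ∈ Finset.Ico 1 t, ∑ i ∈ Finset.Icc 1 l, 2 * B * (β l * (G * L + ε l)) :=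
          hdouble
      _ = ∑ l ∈ Finset.Ico 1 t, (l : ℝ) * (2 * B * (β l * (G * L + ε l))) :=
          Finset.sum_congr rfl fun l _ => hinner l
      _ = 2 * B * ∑ l ∈ Finset.Icc 1 (t - 1), (l : ℝ) * (β l * (G * L + ε l)) := by
          rw [hIcoIcc, Finset.mul_sum]
          exact Finset.sum_congr rfl fun l _ => by ring
  -- assemble everything
  have hA1 : ∑ i ∈ Finset.Icc 1 t, (ℓu (θ i) + lam i * ℓr (θ i))
      = ∑ j ∈ Finset.range t, (ℓu (θ (j + 1)) + lam (j + 1) * ℓr (θ (j + 1))) :=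
    hre _
  have hA2 : ∑ i ∈ Finset.Icc 1 t, (ℓu θstar + lam i * ℓr θstar)
      = ∑ j ∈ Finset.range t, (ℓu θstar + lam (j + 1) * ℓr θstar) := hre _
  have hstar' := hstar (θi t)
  rw [Finset.sum_sub_distrib] at hsumgd
  rw [Finset.sum_sub_distrib] at hshift1
  rw [Finset.sum_sub_distrib] at htel2
  rw [Finset.sum_sub_distrib] at hdyn
  linarith [hsumgd, hshift1, htel2, hDB, hdyn, hstar', hA1, hA2]
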